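/- Let A, A* be a Leonard pair in Mat_{d+1}(K) with A lower triangular and A*_{ij} = 0 whenever j - i > 1. Then A*_{j-1,j} ≠ 0 for 1 ≤ j ≤ d. -/
import Mathlib


open Polynomial Matrix Finset

variable {K : Type*} [Field K]

/-- The primitive idempotent of `A` associated with eigenvalue `θ i`:
`E i = ∏_{j ≠ i} (A - θ j • 1) / (θ i - θ j)`. -/
noncomputable def primIdem {d : ℕ} (A : Matrix (Fin (d + 1)) (Fin (d + 1)) K)
    (θ : Fin (d + 1) → K) (i : Fin (d + 1)) : Matrix (Fin (d + 1)) (Fin (d + 1)) K :=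
  Polynomial.aeval A
    (∏ j ∈ Finset.univ.erase i,
      (Polynomial.C (θ i - θ j)⁻¹ * (Polynomial.X - Polynomial.C (θ j))))

/-- `A` is multiplicity-free with (distinct) eigenvalues `θ 0, …, θ d`. -/
def MultFreeWith {d : ℕ} (A : Matrix (Fin (d + 1)) (Fin (d + 1)) K)
    (θ : Fin (d + 1) → K) : Prop :=
  Function.Injective θ ∧ A.charpoly = ∏ i, (Polynomial.X - Polynomial.C (θ i))

/-- `θ` is an eigenvalue sequence for the (ordered) pair `A, B`: the corresponding
ordering of the primitive idempotents of `A` is an idempotent sequence for `A, B`. -/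
def IsEigenvalueSeq {d : ℕ} (A B : Matrix (Fin (d + 1)) (Fin (d + 1)) K)
    (θ : Fin (d + 1) → K) : Prop :=
  MultFreeWith A θ ∧
    ∀ i j : Fin (d + 1),
      (1 < |((i : ℕ) : ℤ) - ((j : ℕ) : ℤ)| → primIdem A θ i * B * primIdem A θ j = 0) ∧
      (|((i : ℕ) : ℤ) - ((j : ℕ) : ℤ)| = 1 → primIdem A θ i * B * primIdem A θ j ≠ 0)

/-- `A, B` is a Leonard pair in `Mat_{d+1}(K)`. -/
def IsLeonardPair {d : ℕ} (A B : Matrix (Fin (d + 1)) (Fin (d + 1)) K) : Prop :=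
  (∃ θ, IsEigenvalueSeq A B θ) ∧ (∃ θs, IsEigenvalueSeq B A θs)


lemma lowerTri_charpoly {d : ℕ} (A : Matrix (Fin (d+1)) (Fin (d+1)) K)
    (hA : ∀ i j : Fin (d+1), (i:ℕ) < (j:ℕ) → A i j = 0) :
    A.charpoly = ∏ p, (X - C (A p p)) := by
  have h : A.BlockTriangular OrderDual.toDual := by
    intro i j hij
    exact hA i j hij
  rw [Matrix.charpoly, Matrix.det_of_lowerTriangular _ h.charmatrix]
  exact Finset.prod_congr rfl fun p _ => charmatrix_apply_eq A p

lemma aeval_row_zero {d : ℕ} (A : Matrix (Fin (d+1)) (Fin (d+1)) K)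
    (hA : ∀ i j : Fin (d+1), (i:ℕ) < (j:ℕ) → A i j = 0) :
    ∀ (n : ℕ) (r : Fin (d+1)), (r:ℕ) < n →
      ∀ q : K[X], (∏ p ∈ univ.filter (fun p : Fin (d+1) => (p:ℕ) ≤ (r:ℕ)), (X - C (A p p))) ∣ q →
      ∀ c, (aeval A q) r c = 0 := by
  intro n
  induction n with
  | zero => omega
  | succ n ih =>
    intro r hr q hq c
    rcases Nat.lt_or_ge (r:ℕ) n with h | h
    · exact ih r h q hq c
    obtain ⟨q', rfl⟩ := hq
    have hsplit : univ.filter (fun p : Fin (d+1) => (p:ℕ) ≤ (r:ℕ))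
        = insert r (univ.filter (fun p : Fin (d+1) => (p:ℕ) < (r:ℕ))) := by
      ext p
      simp only [Finset.mem_filter, Finset.mem_insert, Finset.mem_univ, true_and, Fin.ext_iff]
      omega
    rw [hsplit, Finset.prod_insert (by simp), mul_assoc, _root_.map_mul, Matrix.mul_apply]
    apply Finset.sum_eq_zero
    intro p _
    rcases lt_trichotomy (p:ℕ) (r:ℕ) with hp | hp | hp
    · have h2 : (aeval A ((∏ p ∈ univ.filter (fun p : Fin (d+1) => (p:ℕ) < (r:ℕ)),
          (X - C (A p p))) * q')) p c = 0 := by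
        apply ih p (by omega)
        apply dvd_mul_of_dvd_left
        apply Finset.prod_dvd_prod_of_subset
        intro x hx
        simp only [Finset.mem_filter, Finset.mem_univ, true_and] at hx ⊢
        omega
      rw [h2, mul_zero]
    · have hpr : p = r := Fin.ext hp
      subst hpr
      simp [Matrix.sub_apply, Matrix.algebraMap_matrix_apply]
    · have h1 : (aeval A (X - C (A r r))) r p = 0 := by
        have hArp : A r p = 0 := hA r p hp
        simp [Matrix.sub_apply, Matrix.algebraMap_matrix_apply, hArp, Fin.ext_iff, Nat.ne_of_lt hp]
      rw [h1, zero_mul]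

lemma aeval_col_zero {d : ℕ} (A : Matrix (Fin (d+1)) (Fin (d+1)) K)
    (hA : ∀ i j : Fin (d+1), (i:ℕ) < (j:ℕ) → A i j = 0) :
    ∀ (n : ℕ) (c : Fin (d+1)), d + 1 - (c:ℕ) ≤ n →
      ∀ q : K[X], (∏ p ∈ univ.filter (fun p : Fin (d+1) => (c:ℕ) ≤ (p:ℕ)), (X - C (A p p))) ∣ q →
      ∀ r, (aeval A q) r c = 0 := by
  intro n
  induction n with
  | zero => intro c hc; omega
  | succ n ih =>
    intro c hc q hq r
    rcases Nat.lt_or_ge n (d + 1 - (c:ℕ)) with h | h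
    swap
    · exact ih c h q hq r
    obtain ⟨q', rfl⟩ := hq
    have hsplit : univ.filter (fun p : Fin (d+1) => (c:ℕ) ≤ (p:ℕ))
        = insert c (univ.filter (fun p : Fin (d+1) => (c:ℕ) < (p:ℕ))) := by
      ext p
      simp only [Finset.mem_filter, Finset.mem_insert, Finset.mem_univ, true_and, Fin.ext_iff]
      omega
    rw [hsplit, Finset.prod_insert (by simp)]
    rw [show (X - C (A c c)) * (∏ p ∈ univ.filter (fun p : Fin (d+1) => (c:ℕ) < (p:ℕ)),
        (X - C (A p p))) * q'
      = ((∏ p ∈ univ.filter (fun p : Fin (d+1) => (c:ℕ) < (p:ℕ)), (X - C (A p p))) * q')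
        * (X - C (A c c)) by ring]
    rw [_root_.map_mul, Matrix.mul_apply]
    apply Finset.sum_eq_zero
    intro p _
    rcases lt_trichotomy (p:ℕ) (c:ℕ) with hp | hp | hp
    · have h1 : (aeval A (X - C (A c c))) p c = 0 := by
        have hApc : A p c = 0 := hA p c hp
        simp [Matrix.sub_apply, Matrix.algebraMap_matrix_apply, hApc, Fin.ext_iff, Nat.ne_of_lt hp]
      rw [h1, mul_zero]
    · have hpc : p = c := Fin.ext hp
      subst hpc
      simp [Matrix.sub_apply, Matrix.algebraMap_matrix_apply]
    · have h2 : (aeval A ((∏ p ∈ univ.filter (fun p : Fin (d+1) => (c:ℕ) < (p:ℕ)),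
          (X - C (A p p))) * q')) r p = 0 := by
        apply ih p (by omega)
        apply dvd_mul_of_dvd_left
        apply Finset.prod_dvd_prod_of_subset
        intro x hx
        simp only [Finset.mem_filter, Finset.mem_univ, true_and] at hx ⊢
        omega
      rw [h2, zero_mul]

lemma exists_adjacent_diff {d : ℕ} (P : Fin (d+1) → Prop) (a b : Fin (d+1))
    (ha : P a) (hb : ¬ P b) :
    ∃ k : ℕ, ∃ _ : k < d,
      (P ⟨k, by omega⟩ ∧ ¬ P ⟨k+1, by omega⟩) ∨ (¬ P ⟨k, by omega⟩ ∧ P ⟨k+1, by omega⟩) := by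
  by_contra hcon
  push_neg at hcon
  have step : ∀ k (h : k < d), (P ⟨k, by omega⟩ ↔ P ⟨k+1, by omega⟩) := by
    intro k h
    have := hcon k h
    tauto
  have const : ∀ m (hm : m ≤ d), (P ⟨m, by omega⟩ ↔ P ⟨0, by omega⟩) := by
    intro m
    induction m with
    | zero => intro _; rfl
    | succ nn ihh => intro hm; rw [← step nn (by omega)]; exact ihh (by omega)
  have h1 := const a.val (by omega)
  have h2 := const b.val (by omega)
  rw [Fin.eta] at h1 h2
  tauto

theorem superdiag_ne_zero {d : ℕ} (A Astar : Matrix (Fin (d + 1)) (Fin (d + 1)) K)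
    (hLP : IsLeonardPair A Astar)
    (hA : ∀ i j : Fin (d + 1), (i : ℕ) < (j : ℕ) → A i j = 0)
    (hAs : ∀ i j : Fin (d + 1), (i : ℕ) + 1 < (j : ℕ) → Astar i j = 0) :
    ∀ j : ℕ, ∀ _ : 1 ≤ j, ∀ _ : j ≤ d,
      Astar ⟨j - 1, by omega⟩ ⟨j, by omega⟩ ≠ 0 := by
  intro j hj1 hjd hzero
  obtain ⟨⟨θ, hseq⟩, -⟩ := hLP
  obtain ⟨⟨hθinj, hchar⟩, hE⟩ := hseq
  have hcp : (∏ p, (X - C (A p p))) = ∏ i, (X - C (θ i)) := by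
    rw [← lowerTri_charpoly A hA, hchar]
  have hf : ∀ i, ∃ p : Fin (d+1), A p p = θ i := by
    intro i
    have h0 : (∏ p, (θ i - A p p)) = 0 := by
      have he := congrArg (eval (θ i)) hcp
      simp only [eval_prod, eval_sub, eval_X, eval_C] at he
      rw [he]
      exact Finset.prod_eq_zero (Finset.mem_univ i) (by ring)
    obtain ⟨p, -, hp⟩ := Finset.prod_eq_zero_iff.mp h0
    exact ⟨p, (sub_eq_zero.mp hp).symm⟩
  choose f hfA using hf
  have hfinj : Function.Injective f := fun a b hab => hθinj (by rw [← hfA a, ← hfA b, hab])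
  have hfbij : Function.Bijective f := ⟨hfinj, Finite.surjective_of_injective hfinj⟩
  set e : Fin (d+1) ≃ Fin (d+1) := Equiv.ofBijective f hfbij with he
  have hdiag : ∀ p, A p p = θ (e.symm p) := by
    intro p
    have h := hfA (e.symm p)
    rwa [show f (e.symm p) = p from e.apply_symm_apply p] at h
  have dvdP : ∀ (i : Fin (d+1)) (T : Finset (Fin (d+1))), T ⊆ univ.erase i →
      (∏ m ∈ T, (X - C (θ m))) ∣
        ∏ m ∈ univ.erase i, (C (θ i - θ m)⁻¹ * (X - C (θ m))) := by
    intro i T hT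
    rw [Finset.prod_mul_distrib]
    exact (Finset.prod_dvd_prod_of_subset T _ _ hT).mul_left _
  have rowZero : ∀ i : Fin (d+1), j ≤ ((f i):ℕ) → ∀ r : Fin (d+1), (r:ℕ) < j →
      ∀ c, primIdem A θ i r c = 0 := by
    intro i hi r hr c
    have hdvd : (∏ p ∈ univ.filter (fun p : Fin (d+1) => (p:ℕ) ≤ (r:ℕ)), (X - C (A p p))) ∣
        ∏ m ∈ univ.erase i, (C (θ i - θ m)⁻¹ * (X - C (θ m))) := by
      have himg : (∏ p ∈ univ.filter (fun p : Fin (d+1) => (p:ℕ) ≤ (r:ℕ)), (X - C (A p p)))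
          = ∏ m ∈ (univ.filter (fun p : Fin (d+1) => (p:ℕ) ≤ (r:ℕ))).image e.symm,
              (X - C (θ m)) := by
        rw [Finset.prod_image (fun x _ y _ h => e.symm.injective h)]
        exact Finset.prod_congr rfl fun p _ => by rw [hdiag p]
      rw [himg]
      apply dvdP
      intro m hm
      simp only [Finset.mem_image, Finset.mem_filter, Finset.mem_univ, true_and] at hm
      obtain ⟨p, hp, rfl⟩ := hm
      rw [Finset.mem_erase]
      refine ⟨?_, Finset.mem_univ _⟩
      intro hcon
      have h1 : f (e.symm p) = f i := by rw [hcon]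
      rw [show f (e.symm p) = p from e.apply_symm_apply p] at h1
      have h2 : (p:ℕ) = ((f i):ℕ) := by rw [h1]
      omega
    unfold primIdem
    exact aeval_row_zero A hA (d+1) r r.isLt _ hdvd c
  have colZero : ∀ i : Fin (d+1), ((f i):ℕ) < j → ∀ cc : Fin (d+1), j ≤ (cc:ℕ) →
      ∀ r, primIdem A θ i r cc = 0 := by
    intro i hi cc hcc r
    have hdvd : (∏ p ∈ univ.filter (fun p : Fin (d+1) => (cc:ℕ) ≤ (p:ℕ)), (X - C (A p p))) ∣
        ∏ m ∈ univ.erase i, (C (θ i - θ m)⁻¹ * (X - C (θ m))) := by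
      have himg : (∏ p ∈ univ.filter (fun p : Fin (d+1) => (cc:ℕ) ≤ (p:ℕ)), (X - C (A p p)))
          = ∏ m ∈ (univ.filter (fun p : Fin (d+1) => (cc:ℕ) ≤ (p:ℕ))).image e.symm,
              (X - C (θ m)) := by
        rw [Finset.prod_image (fun x _ y _ h => e.symm.injective h)]
        exact Finset.prod_congr rfl fun p _ => by rw [hdiag p]
      rw [himg]
      apply dvdP
      intro m hm
      simp only [Finset.mem_image, Finset.mem_filter, Finset.mem_univ, true_and] at hm
      obtain ⟨p, hp, rfl⟩ := hm
      rw [Finset.mem_erase]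
      refine ⟨?_, Finset.mem_univ _⟩
      intro hcon
      have h1 : f (e.symm p) = f i := by rw [hcon]
      rw [show f (e.symm p) = p from e.apply_symm_apply p] at h1
      have h2 : (p:ℕ) = ((f i):ℕ) := by rw [h1]
      omega
    unfold primIdem
    exact aeval_col_zero A hA (d+1) cc (by omega) _ hdvd r
  have key : ∀ x y : Fin (d+1), ((f x):ℕ) < j → j ≤ ((f y):ℕ) →
      primIdem A θ x * Astar * primIdem A θ y = 0 := by
    intro x y hx hy
    ext r c
    rw [Matrix.mul_apply, Matrix.zero_apply]
    apply Finset.sum_eq_zero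
    intro q _
    rcases Nat.lt_or_ge (q:ℕ) j with hq | hq
    · rw [rowZero y hy q hq c, mul_zero]
    · have hz : (primIdem A θ x * Astar) r q = 0 := by
        rw [Matrix.mul_apply]
        apply Finset.sum_eq_zero
        intro p _
        rcases Nat.lt_or_ge (p:ℕ) j with hp | hp
        · rcases Nat.lt_or_ge ((p:ℕ)+1) (q:ℕ) with h1 | h1
          · rw [hAs p q h1, mul_zero]
          · have hpq : Astar p q = 0 := by
              have hpe : p = (⟨j-1, by omega⟩ : Fin (d+1)) := Fin.ext (show (p:ℕ) = j-1 by omega)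
              have hqe : q = (⟨j, by omega⟩ : Fin (d+1)) := Fin.ext (show (q:ℕ) = j by omega)
              rw [hpe, hqe]
              exact hzero
            rw [hpq, mul_zero]
        · rw [colZero x hx p hp r, zero_mul]
      rw [hz, zero_mul]
  have ha : j ≤ ((f (e.symm ⟨j, by omega⟩)):ℕ) := by
    rw [show f (e.symm ⟨j, by omega⟩) = ⟨j, by omega⟩ from e.apply_symm_apply _]
  have hb : ¬ j ≤ ((f (e.symm ⟨j-1, by omega⟩)):ℕ) := by
    rw [show f (e.symm ⟨j-1, by omega⟩) = ⟨j-1, by omega⟩ from e.apply_symm_apply _]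
    show ¬ j ≤ j - 1
    omega
  obtain ⟨k, hk, hcase⟩ := exists_adjacent_diff (fun i => j ≤ ((f i):ℕ)) _ _ ha hb
  rcases hcase with ⟨h0, h1⟩ | ⟨h0, h1⟩
  · have habs : |(((k+1:ℕ)):ℤ) - ((k:ℕ):ℤ)| = 1 := by
      push_cast
      rw [add_sub_cancel_left, abs_one]
    exact (hE ⟨k+1, by omega⟩ ⟨k, by omega⟩).2 habs
      (key _ _ (Nat.lt_of_not_le h1) h0)
  · have habs : |((k:ℕ):ℤ) - (((k+1:ℕ)):ℤ)| = 1 := by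
      push_cast
      rw [show ((k:ℤ)) - ((k:ℤ)+1) = -1 by ring]
      norm_num
    exact (hE ⟨k, by omega⟩ ⟨k+1, by omega⟩).2 habs
      (key _ _ (Nat.lt_of_not_le h0) h1)
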